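/- Let a and b be nonnegative integers, and set m = 2^a and n = 3^b. Then |m − n| = 1 if and only if (a, b) is one of (1,0), (1,1), (2,1), (3,2). -/

import Mathlib

private lemma pow3_eq (b k : ℕ) (hk : (3:ℕ)^b = 3^k) : b = k :=
  Nat.pow_right_injective (by norm_num) hk

private lemma caseA (a b : ℕ) (h : (2:ℕ)^a = 3^b + 1) :
    (a = 1 ∧ b = 0) ∨ (a = 2 ∧ b = 1) := by
  have ha : a ≤ 2 := by
    by_contra ha
    push_neg at ha
    have h8 : ((2:ZMod 8))^a = 3^b + 1 := by
      have := congrArg (Nat.cast : ℕ → ZMod 8) h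
      push_cast at this
      exact this
    have h2 : ((2:ZMod 8))^a = 0 := by
      have h3 : a = 3 + (a - 3) := by omega
      rw [h3, pow_add, show ((2:ZMod 8))^3 = 0 from by decide, zero_mul]
    rw [h2] at h8
    have hb : ((3:ZMod 8))^b = 3^(b % 2) := by
      conv_lhs => rw [← Nat.div_add_mod b 2]
      rw [pow_add, pow_mul, show ((3:ZMod 8))^2 = 1 from by decide, one_pow, one_mul]
    rw [hb] at h8
    have : b % 2 = 0 ∨ b % 2 = 1 := by omega
    rcases this with h0 | h0 <;> rw [h0] at h8 <;> revert h8 <;> decide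
  have hble : (3:ℕ)^b ≤ 3 := by
    have h2a : (2:ℕ)^a ≤ 2^2 := Nat.pow_le_pow_right (by norm_num) ha
    omega
  have hb1 : b ≤ 1 := by
    by_contra hb
    push_neg at hb
    have : (3:ℕ)^2 ≤ 3^b := Nat.pow_le_pow_right (by norm_num) hb
    norm_num at this
    omega
  interval_cases a <;> interval_cases b <;> norm_num at h <;> norm_num

private lemma caseB (a b : ℕ) (h : (3:ℕ)^b = 2^a + 1) :
    (a = 1 ∧ b = 1) ∨ (a = 3 ∧ b = 2) := by
  have ha : a ≤ 3 := by
    by_contra ha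
    push_neg at ha
    have h16 : ((3:ZMod 16))^b = 2^a + 1 := by
      have := congrArg (Nat.cast : ℕ → ZMod 16) h
      push_cast at this
      exact this
    have h2 : ((2:ZMod 16))^a = 0 := by
      have h4 : a = 4 + (a - 4) := by omega
      rw [h4, pow_add, show ((2:ZMod 16))^4 = 0 from by decide, zero_mul]
    rw [h2, zero_add] at h16
    have hb : ((3:ZMod 16))^b = 3^(b % 4) := by
      conv_lhs => rw [← Nat.div_add_mod b 4]
      rw [pow_add, pow_mul, show ((3:ZMod 16))^4 = 1 from by decide, one_pow, one_mul]
    rw [hb] at h16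
    have hmod : b % 4 = 0 := by
      have : b % 4 = 0 ∨ b % 4 = 1 ∨ b % 4 = 2 ∨ b % 4 = 3 := by omega
      rcases this with h0|h0|h0|h0
      · exact h0
      all_goals (rw [h0] at h16; exact absurd h16 (by decide))
    -- now 4 ∣ b, go mod 5
    have h5 : ((3:ZMod 5))^b = 2^a + 1 := by
      have := congrArg (Nat.cast : ℕ → ZMod 5) h
      push_cast at this
      exact this
    have hb5 : ((3:ZMod 5))^b = 1 := by
      conv_lhs => rw [← Nat.div_add_mod b 4, hmod, Nat.add_zero, pow_mul,
        show ((3:ZMod 5))^4 = 1 from by decide, one_pow]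
    rw [hb5] at h5
    have h25 : ((2:ZMod 5))^a = 0 := by
      have : (2:ZMod 5)^a + 1 = 1 := h5.symm
      linear_combination this
    have h2m : ((2:ZMod 5))^a = 2^(a % 4) := by
      conv_lhs => rw [← Nat.div_add_mod a 4]
      rw [pow_add, pow_mul, show ((2:ZMod 5))^4 = 1 from by decide, one_pow, one_mul]
    rw [h2m] at h25
    have : a % 4 = 0 ∨ a % 4 = 1 ∨ a % 4 = 2 ∨ a % 4 = 3 := by omega
    rcases this with h0|h0|h0|h0 <;> rw [h0] at h25 <;> exact absurd h25 (by decide)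
  have hble : (3:ℕ)^b ≤ 9 := by
    have h2a : (2:ℕ)^a ≤ 2^3 := Nat.pow_le_pow_right (by norm_num) ha
    omega
  have hb2 : b ≤ 2 := by
    by_contra hb
    push_neg at hb
    have : (3:ℕ)^3 ≤ 3^b := Nat.pow_le_pow_right (by norm_num) hb
    norm_num at this
    omega
  interval_cases a <;> interval_cases b <;> norm_num at h <;> norm_num

theorem two_pow_three_pow_dist_one (a b : ℕ) :
    |(2 : ℤ) ^ a - 3 ^ b| = 1 ↔
      (a, b) = (1, 0) ∨ (a, b) = (1, 1) ∨ (a, b) = (2, 1) ∨ (a, b) = (3, 2) := by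
  constructor
  · intro h
    rcases abs_eq (by norm_num : (0:ℤ) ≤ 1) |>.mp h with h1 | h1
    · have hn : (2:ℕ)^a = 3^b + 1 := by
        have : (2:ℤ)^a = 3^b + 1 := by linarith
        exact_mod_cast this
      rcases caseA a b hn with ⟨ha, hb⟩ | ⟨ha, hb⟩ <;> subst ha <;> subst hb <;> simp
    · have hn : (3:ℕ)^b = 2^a + 1 := by
        have : (3:ℤ)^b = 2^a + 1 := by linarith
        exact_mod_cast this
      rcases caseB a b hn with ⟨ha, hb⟩ | ⟨ha, hb⟩ <;> subst ha <;> subst hb <;> simp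
  · rintro (h | h | h | h) <;> simp_all [Prod.ext_iff]
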